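/- Let Z ⊂ ℝ^d be nonempty and compact, satisfying the uniform local volume condition: there exist constants v_∧ ∈ (0,1] and σ_∨ > 0 such that Leb({u ∈ Z : |z−u| ≤ r}) ≥ v_∧ V_d(r) for every z ∈ Z and every r ∈ (0, σ_∨ √d]. Let μ_b be a probability measure on Z absolutely continuous with respect to Lebesgue measure with density p_b ≥ p_ > 0 Lebesgue-almost everywhere on Z. Then for every σ ∈ (0, σ_∨], inf_{z∈Z} ∫_Z exp(−|z−u|²/(2σ²)) μ_b(du) ≥ (1/2) p_ v_∧ (2π)^{d/2} σ^d. -/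

import Mathlib

open MeasureTheory Set Real

lemma sinh_ineq {x : ℝ} (hx : 0 ≤ x) : 2 * x ≤ Real.exp x - Real.exp (-x) := by
  rcases eq_or_lt_of_le hx with h | h
  · simp [← h]
  · have := (Real.self_lt_sinh_iff).2 h
    rw [Real.sinh_eq] at this
    linarith

lemma image_exp_neg (a : ℝ) (ha : 0 < a) :
    (fun x : ℝ => a * Real.exp (-x)) '' (Ioi 0) = Ioo 0 a := by
  ext y
  simp only [mem_image, mem_Ioi, mem_Ioo]
  constructor
  · rintro ⟨x, hx, rfl⟩
    have h1 : Real.exp (-x) < 1 := Real.exp_lt_one_iff.2 (by linarith)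
    have h2 := Real.exp_pos (-x)
    constructor
    · positivity
    · nlinarith
  · rintro ⟨hy0, hya⟩
    refine ⟨-Real.log (y / a), ?_, ?_⟩
    · simpa using Real.log_neg (by positivity) (by rw [div_lt_one ha]; exact hya)
    · show a * Real.exp (- -Real.log (y/a)) = y
      rw [neg_neg, Real.exp_log (by positivity)]
      field_simp

lemma image_exp_pos (a : ℝ) (ha : 0 < a) :
    (fun x : ℝ => a * Real.exp x) '' (Ioi 0) = Ioi a := by
  ext y
  simp only [mem_image, mem_Ioi]
  constructor
  · rintro ⟨x, hx, rfl⟩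
    have : 1 < Real.exp x := Real.one_lt_exp_iff.2 hx
    nlinarith
  · intro hy
    refine ⟨Real.log (y / a), ?_, ?_⟩
    · exact Real.log_pos (by rw [lt_div_iff₀ ha]; linarith)
    · show a * Real.exp (Real.log (y/a)) = y
      rw [Real.exp_log (div_pos (ha.trans hy) ha)]
      field_simp

lemma gamma_tail_le (a : ℝ) (ha : 0 < a) :
    ∫ t in Ioi a, Real.exp (-t) * t ^ (a-1) ≤ ∫ t in Ioo 0 a, Real.exp (-t) * t ^ (a-1) := by
  set g : ℝ → ℝ := fun t => Real.exp (-t) * t ^ (a-1) with hg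
  have hderiv1 : ∀ x ∈ Ioi (0:ℝ), HasDerivWithinAt (fun x : ℝ => a * Real.exp (-x))
      (a * (-Real.exp (-x))) (Ioi 0) x := by
    intro x hx
    exact (((Real.hasDerivAt_exp (-x)).comp x (hasDerivAt_neg x)).const_mul a).hasDerivWithinAt.congr_deriv (by ring)
  have hderiv2 : ∀ x ∈ Ioi (0:ℝ), HasDerivWithinAt (fun x : ℝ => a * Real.exp x)
      (a * Real.exp x) (Ioi 0) x := by
    intro x hx
    exact ((Real.hasDerivAt_exp x).const_mul a).hasDerivWithinAt
  have hinj1 : InjOn (fun x : ℝ => a * Real.exp (-x)) (Ioi 0) := by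
    intro x hx y hy h
    simp only at h
    have := mul_left_cancel₀ (ne_of_gt ha) h
    have := Real.exp_injective this
    linarith [neg_injective this]
  have hinj2 : InjOn (fun x : ℝ => a * Real.exp x) (Ioi 0) := by
    intro x hx y hy h
    simp only at h
    exact Real.exp_injective (mul_left_cancel₀ (ne_of_gt ha) h)
  have h1 : ∫ t in Ioo 0 a, g t = ∫ x in Ioi 0, |a * (-Real.exp (-x))| • g (a * Real.exp (-x)) := by
    rw [← image_exp_neg a ha]
    exact MeasureTheory.integral_image_eq_integral_abs_deriv_smul measurableSet_Ioi hderiv1 hinj1 g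
  have h2 : ∫ t in Ioi a, g t = ∫ x in Ioi 0, |a * Real.exp x| • g (a * Real.exp x) := by
    rw [← image_exp_pos a ha]
    exact MeasureTheory.integral_image_eq_integral_abs_deriv_smul measurableSet_Ioi hderiv2 hinj2 g
  -- simplification of the two integrands
  have key : ∀ x : ℝ, 0 ≤ x →
      |a * Real.exp x| • g (a * Real.exp x) ≤ |a * (-Real.exp (-x))| • g (a * Real.exp (-x)) := by
    intro x hx
    have e1 : ∀ y : ℝ, 0 < y → y * (Real.exp (-y) * y ^ (a-1)) = y ^ a * Real.exp (-y) := by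
      intro y hy
      rw [show y ^ a = y ^ (a - 1 + 1) by ring_nf, Real.rpow_add_one (ne_of_gt hy)]
      ring
    have p1 : (0:ℝ) < a * Real.exp x := by positivity
    have p2 : (0:ℝ) < a * Real.exp (-x) := by positivity
    rw [abs_of_pos p1, smul_eq_mul, hg]
    rw [show |a * (-Real.exp (-x))| = a * Real.exp (-x) by
      rw [abs_mul, abs_neg, abs_of_pos ha, abs_of_pos (Real.exp_pos _)]]
    rw [smul_eq_mul, e1 _ p1, e1 _ p2]
    have rp : ∀ s : ℝ, (a * Real.exp s) ^ a = a ^ a * Real.exp (s * a) := by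
      intro s
      rw [Real.mul_rpow (le_of_lt ha) (Real.exp_pos s).le,
        Real.rpow_def_of_pos (Real.exp_pos s), Real.log_exp]
    rw [rp, rp, mul_assoc, mul_assoc, ← Real.exp_add, ← Real.exp_add]
    have hs := sinh_ineq hx
    have harg : x * a + -(a * Real.exp x) ≤ -x * a + -(a * Real.exp (-x)) := by nlinarith
    exact mul_le_mul_of_nonneg_left (Real.exp_le_exp.2 harg) (by positivity)
  have hint_g : IntegrableOn g (Ioo 0 a) :=
    (Real.GammaIntegral_convergent ha).mono_set Ioo_subset_Ioi_self
  have hint1 : IntegrableOn (fun x => |a * (-Real.exp (-x))| • g (a * Real.exp (-x))) (Ioi 0) := by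
    rw [← MeasureTheory.integrableOn_image_iff_integrableOn_abs_deriv_smul
      measurableSet_Ioi hderiv1 hinj1 g, image_exp_neg a ha]
    exact hint_g
  rw [h1, h2]
  apply MeasureTheory.setIntegral_mono_on ?_ hint1 measurableSet_Ioi
  · intro x hx
    exact key x (le_of_lt hx)
  · rw [← MeasureTheory.integrableOn_image_iff_integrableOn_abs_deriv_smul
      measurableSet_Ioi hderiv2 hinj2 g, image_exp_pos a ha]
    exact (Real.GammaIntegral_convergent ha).mono_set (Ioi_subset_Ioi (le_of_lt ha))

lemma gamma_median (a : ℝ) (ha : 0 < a) :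
    Real.Gamma a / 2 ≤ ∫ t in Ioc 0 a, Real.exp (-t) * t ^ (a-1) := by
  have hsplit : Real.Gamma a = (∫ t in Ioc 0 a, Real.exp (-t) * t ^ (a-1))
      + ∫ t in Ioi a, Real.exp (-t) * t ^ (a-1) := by
    rw [Real.Gamma_eq_integral ha, ← Ioc_union_Ioi_eq_Ioi (le_of_lt ha),
      MeasureTheory.setIntegral_union (Ioc_disjoint_Ioi le_rfl) measurableSet_Ioi
        ((Real.GammaIntegral_convergent ha).mono_set Ioc_subset_Ioi_self)
        ((Real.GammaIntegral_convergent ha).mono_set (Ioi_subset_Ioi (le_of_lt ha)))]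
  have htail := gamma_tail_le a ha
  rw [← MeasureTheory.integral_Ioc_eq_integral_Ioo] at htail
  linarith

lemma incomplete_parts (a : ℝ) (ha : 0 < a) :
    ∫ t in Ioc 0 a, Real.exp (-t) * t ^ a
      = a * (∫ t in Ioc 0 a, Real.exp (-t) * t ^ (a-1)) - a ^ a * Real.exp (-a) := by
  set F : ℝ → ℝ := fun t => -(t ^ a * Real.exp (-t)) with hF
  set F' : ℝ → ℝ := fun t => Real.exp (-t) * t ^ a - a * (Real.exp (-t) * t ^ (a-1)) with hF'
  have hcont : ContinuousOn F (Icc 0 a) := by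
    apply ContinuousOn.neg
    apply ContinuousOn.mul
    · intro t ht
      exact (Real.continuousAt_rpow_const t a (Or.inr (le_of_lt ha))).continuousWithinAt
    · exact (Real.continuous_exp.comp continuous_neg).continuousOn
  have hderiv : ∀ t ∈ Ioo 0 a, HasDerivAt F (F' t) t := by
    intro t ht
    have h1 : HasDerivAt (fun x : ℝ => x ^ a) (a * t ^ (a-1)) t :=
      Real.hasDerivAt_rpow_const (Or.inl (ne_of_gt ht.1))
    have h2 : HasDerivAt (fun x : ℝ => Real.exp (-x)) (-Real.exp (-t)) t := by
      simpa using (hasDerivAt_neg t).exp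
    have := (h1.mul h2).neg
    refine this.congr_deriv ?_
    rw [hF']; ring
  have hrpow : IntervalIntegrable (fun t : ℝ => t ^ (a-1)) volume 0 a :=
    intervalIntegral.intervalIntegrable_rpow' (by linarith)
  have hrpow2 : IntervalIntegrable (fun t : ℝ => t ^ a) volume 0 a :=
    intervalIntegral.intervalIntegrable_rpow' (by linarith)
  have hexp : ContinuousOn (fun t : ℝ => Real.exp (-t)) (Set.uIcc 0 a) :=
    (Real.continuous_exp.comp continuous_neg).continuousOn
  have hint1 : IntervalIntegrable (fun t : ℝ => Real.exp (-t) * t ^ a) volume 0 a := by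
    simpa [mul_comm] using hrpow2.mul_continuousOn hexp
  have hint2 : IntervalIntegrable (fun t : ℝ => Real.exp (-t) * t ^ (a-1)) volume 0 a := by
    simpa [mul_comm] using hrpow.mul_continuousOn hexp
  have hint : IntervalIntegrable F' volume 0 a := hint1.sub (hint2.const_mul a)
  have hftc := intervalIntegral.integral_eq_sub_of_hasDerivAt_of_le (le_of_lt ha)
    hcont hderiv hint
  have hF0 : F 0 = 0 := by simp [hF, Real.zero_rpow (ne_of_gt ha)]
  have hFa : F a = -(a ^ a * Real.exp (-a)) := by simp [hF]
  rw [hF0, hFa, sub_zero] at hftc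
  rw [intervalIntegral.integral_of_le (le_of_lt ha)] at hftc
  rw [MeasureTheory.integral_sub
      ((intervalIntegrable_iff_integrableOn_Ioc_of_le (le_of_lt ha)).1 hint1)
      ((intervalIntegrable_iff_integrableOn_Ioc_of_le (le_of_lt ha)).1 (hint2.const_mul a)),
    MeasureTheory.integral_const_mul] at hftc
  linarith

lemma key_real (a : ℝ) (ha : 0 < a) :
    2 ^ a * (Real.Gamma (a+1) / 2)
      ≤ ∫ s in Ioi 0, Real.exp (-s) * min (2*s) (2*a) ^ a := by
  have hint_pow : IntegrableOn (fun s : ℝ => Real.exp (-s) * s ^ a) (Ioc 0 a) := by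
    have := (Real.GammaIntegral_convergent (by linarith : (0:ℝ) < a + 1)).mono_set
      (Ioc_subset_Ioi_self : Ioc (0:ℝ) a ⊆ Ioi 0)
    simpa using this
  have hint1 : IntegrableOn (fun s : ℝ => Real.exp (-s) * min (2*s) (2*a) ^ a) (Ioc 0 a) := by
    apply MeasureTheory.IntegrableOn.congr_fun (hint_pow.const_mul (2^a)) ?_ measurableSet_Ioc
    intro s hs
    show 2 ^ a * (Real.exp (-s) * s ^ a) = Real.exp (-s) * min (2*s) (2*a) ^ a
    rw [min_eq_left (by linarith [hs.2] : 2*s ≤ 2*a),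
      Real.mul_rpow (by norm_num) (le_of_lt hs.1)]
    ring
  have hbase : IntegrableOn (fun s : ℝ => Real.exp (-s) * (2*a) ^ a) (Ioi a) := by
    have h := (exp_neg_integrableOn_Ioi a one_pos).mul_const ((2*a)^a)
    exact h.congr (Filter.Eventually.of_forall fun x => by norm_num)
  have hint2 : IntegrableOn (fun s : ℝ => Real.exp (-s) * min (2*s) (2*a) ^ a) (Ioi a) := by
    apply MeasureTheory.IntegrableOn.congr_fun hbase ?_ measurableSet_Ioi
    intro s hs
    show Real.exp (-s) * (2*a) ^ a = Real.exp (-s) * min (2*s) (2*a) ^ a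
    rw [min_eq_right (by linarith [mem_Ioi.1 hs] : 2*a ≤ 2*s)]
  have hsplit : ∫ s in Ioi 0, Real.exp (-s) * min (2*s) (2*a) ^ a
      = (∫ s in Ioc 0 a, Real.exp (-s) * min (2*s) (2*a) ^ a)
        + ∫ s in Ioi a, Real.exp (-s) * min (2*s) (2*a) ^ a := by
    rw [← Ioc_union_Ioi_eq_Ioi (le_of_lt ha),
      MeasureTheory.setIntegral_union (Ioc_disjoint_Ioi le_rfl) measurableSet_Ioi hint1 hint2]
  have e1 : ∫ s in Ioc 0 a, Real.exp (-s) * min (2*s) (2*a) ^ a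
      = 2 ^ a * ∫ s in Ioc 0 a, Real.exp (-s) * s ^ a := by
    rw [← MeasureTheory.integral_const_mul]
    apply MeasureTheory.setIntegral_congr_fun measurableSet_Ioc
    intro s hs
    show Real.exp (-s) * min (2*s) (2*a) ^ a = 2 ^ a * (Real.exp (-s) * s ^ a)
    rw [min_eq_left (by linarith [hs.2] : 2*s ≤ 2*a),
      Real.mul_rpow (by norm_num) (le_of_lt hs.1)]
    ring
  have e2 : ∫ s in Ioi a, Real.exp (-s) * min (2*s) (2*a) ^ a
      = 2 ^ a * a ^ a * Real.exp (-a) := by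
    have h : ∫ s in Ioi a, Real.exp (-s) * min (2*s) (2*a) ^ a
        = ∫ s in Ioi a, Real.exp (-s) * (2*a) ^ a := by
      apply MeasureTheory.setIntegral_congr_fun measurableSet_Ioi
      intro s hs
      show Real.exp (-s) * min (2*s) (2*a) ^ a = Real.exp (-s) * (2*a) ^ a
      rw [min_eq_right (by linarith [mem_Ioi.1 hs] : 2*a ≤ 2*s)]
    rw [h, MeasureTheory.integral_mul_const, integral_exp_neg_Ioi,
      Real.mul_rpow (by norm_num) (le_of_lt ha)]
    ring
  have hparts := incomplete_parts a ha
  have hmed := gamma_median a ha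
  have hGamma : Real.Gamma (a+1) = a * Real.Gamma a := Real.Gamma_add_one (ne_of_gt ha)
  have h2a : (0:ℝ) < 2 ^ a := Real.rpow_pos_of_pos (by norm_num) a
  have key2 : 2^a * (a * (Real.Gamma a / 2))
      ≤ 2^a * (a * ∫ t in Ioc 0 a, Real.exp (-t) * t ^ (a-1)) :=
    mul_le_mul_of_nonneg_left (mul_le_mul_of_nonneg_left hmed (le_of_lt ha)) (le_of_lt h2a)
  rw [hsplit, e1, e2, hparts, hGamma]
  linarith


lemma image_exp_neg' : (fun x : ℝ => Real.exp (-x)) '' (Ioi 0) = Ioo 0 1 := by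
  ext y
  simp only [mem_image, mem_Ioi, mem_Ioo]
  constructor
  · rintro ⟨x, hx, rfl⟩
    exact ⟨Real.exp_pos _, Real.exp_lt_one_iff.2 (by linarith)⟩
  · rintro ⟨hy0, hy1⟩
    exact ⟨-Real.log y, by simpa using Real.log_neg hy0 hy1,
      by rw [neg_neg, Real.exp_log hy0]⟩

lemma lintegral_gauss_lower
    {d : ℕ} (hd : 0 < d) {Z : Set (EuclideanSpace ℝ (Fin d))}
    {vmin σmax : ℝ} (hv0 : 0 < vmin) (hσmax : 0 < σmax)
    (hvol : ∀ z ∈ Z, ∀ r : ℝ, 0 < r → r ≤ σmax * Real.sqrt d →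
      ENNReal.ofReal (vmin *
          (Real.pi ^ ((d : ℝ) / 2) * r ^ (d : ℕ) / Real.Gamma ((d : ℝ) / 2 + 1))) ≤
        volume {u : EuclideanSpace ℝ (Fin d) | u ∈ Z ∧ dist z u ≤ r})
    {σ : ℝ} (hσ0 : 0 < σ) (hσ : σ ≤ σmax) {z : EuclideanSpace ℝ (Fin d)} (hz : z ∈ Z) :
    ENNReal.ofReal ((1/2) * vmin * (2*Real.pi) ^ ((d:ℝ)/2) * σ ^ (d : ℕ))
      ≤ ∫⁻ u, ENNReal.ofReal (Real.exp (-dist z u ^ 2 / (2 * σ ^ 2)))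
          ∂(volume.restrict Z) := by
  set a : ℝ := (d:ℝ)/2 with ha_def
  have ha : 0 < a := by
    have : (0:ℝ) < d := by exact_mod_cast hd
    positivity
  have hΓ : 0 < Real.Gamma (a + 1) := Real.Gamma_pos_of_pos (by linarith)
  set f : EuclideanSpace ℝ (Fin d) → ℝ :=
    fun u => Real.exp (-dist z u ^ 2 / (2 * σ ^ 2)) with hf_def
  have hfc : Continuous f := by
    apply Real.continuous_exp.comp
    exact (((continuous_const.dist continuous_id).pow 2).neg).div_const _
  set C : ℝ := vmin * (Real.pi ^ a * σ ^ (d:ℕ) / Real.Gamma (a + 1)) with hC_def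
  have hC0 : 0 ≤ C := by positivity
  set m : ℝ → ℝ := fun t => min (2 * Real.log (1/t)) (d:ℝ) with hm_def
  -- layer cake
  have hlayer : ∫⁻ u, ENNReal.ofReal (f u) ∂(volume.restrict Z)
      = ∫⁻ t in Ioi 0, (volume.restrict Z) {u | t ≤ f u} :=
    lintegral_eq_lintegral_meas_le (volume.restrict Z)
      (Filter.Eventually.of_forall fun u => (Real.exp_pos _).le)
      hfc.measurable.aemeasurable
  -- pointwise lower bound for the measure of superlevel sets, t ∈ (0,1)
  have hpoint : ∀ t ∈ Ioo (0:ℝ) 1,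
      ENNReal.ofReal (C * m t ^ a) ≤ (volume.restrict Z) {u | t ≤ f u} := by
    intro t ht
    have hlog : 0 < Real.log (1/t) := by
      rw [one_div, Real.log_inv]
      simpa using Real.log_neg ht.1 ht.2
    have hm0 : 0 < m t := lt_min (by linarith) (by exact_mod_cast hd)
    have hmd : m t ≤ (d:ℝ) := min_le_right _ _
    set r : ℝ := σ * Real.sqrt (m t) with hr_def
    have hr0 : 0 < r := mul_pos hσ0 (Real.sqrt_pos.2 hm0)
    have hrle : r ≤ σmax * Real.sqrt d :=
      mul_le_mul hσ (Real.sqrt_le_sqrt hmd) (Real.sqrt_nonneg _) hσmax.le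
    have hsub : {u : EuclideanSpace ℝ (Fin d) | u ∈ Z ∧ dist z u ≤ r}
        ⊆ {u | t ≤ f u} ∩ Z := by
      rintro u ⟨huZ, hur⟩
      refine ⟨?_, huZ⟩
      show t ≤ f u
      have hd2 : dist z u ^ 2 ≤ σ ^ 2 * m t := by
        have h1 : dist z u ^ 2 ≤ r ^ 2 :=
          pow_le_pow_left₀ dist_nonneg hur 2
        have h2 : r ^ 2 = σ ^ 2 * m t := by
          rw [hr_def, mul_pow, Real.sq_sqrt hm0.le]
        linarith
      have h3 : -dist z u ^ 2 / (2 * σ ^ 2) ≥ Real.log t := by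
        have hmt : m t ≤ 2 * Real.log (1/t) := min_le_left _ _
        have hlt : Real.log (1/t) = -Real.log t := by rw [one_div, Real.log_inv]
        rw [ge_iff_le, le_div_iff₀ (by positivity : (0:ℝ) < 2 * σ ^ 2)]
        nlinarith
      calc t = Real.exp (Real.log t) := (Real.exp_log ht.1).symm
        _ ≤ f u := Real.exp_le_exp.2 h3
    have hmeas : MeasurableSet {u : EuclideanSpace ℝ (Fin d) | t ≤ f u} :=
      (isClosed_le continuous_const hfc).measurableSet
    have hres : (volume.restrict Z) {u | t ≤ f u} = volume ({u | t ≤ f u} ∩ Z) :=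
      Measure.restrict_apply hmeas
    have hvol' := hvol z hz r hr0 hrle
    have hrw : vmin * (Real.pi ^ ((d : ℝ) / 2) * r ^ (d : ℕ) / Real.Gamma ((d : ℝ) / 2 + 1))
        = C * m t ^ a := by
      have hsq : Real.sqrt (m t) ^ (d:ℕ) = m t ^ a := by
        rw [← Real.rpow_natCast (Real.sqrt (m t)) d, Real.sqrt_eq_rpow,
          ← Real.rpow_mul hm0.le]
        congr 1
        ring
      rw [hC_def, hr_def, mul_pow, hsq]
      rw [← ha_def]
      ring
    calc ENNReal.ofReal (C * m t ^ a)
        = ENNReal.ofReal (vmin * (Real.pi ^ ((d : ℝ) / 2) * r ^ (d : ℕ)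
            / Real.Gamma ((d : ℝ) / 2 + 1))) := by rw [hrw]
      _ ≤ volume {u : EuclideanSpace ℝ (Fin d) | u ∈ Z ∧ dist z u ≤ r} := hvol'
      _ ≤ volume ({u | t ≤ f u} ∩ Z) := measure_mono hsub
      _ = (volume.restrict Z) {u | t ≤ f u} := hres.symm
  -- integrability of the lower layer function
  have hm_meas : Measurable m := by
    apply Measurable.min ?_ measurable_const
    exact (Real.measurable_log.comp (measurable_const.div measurable_id)).const_mul 2
  have hg_meas : Measurable fun t : ℝ => C * m t ^ a :=
    ((Real.continuous_rpow_const ha.le).measurable.comp hm_meas).const_mul C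
  have hg_nonneg : ∀ t ∈ Ioo (0:ℝ) 1, 0 ≤ C * m t ^ a := by
    intro t ht
    have hlog : 0 < Real.log (1/t) := by
      rw [one_div, Real.log_inv]
      simpa using Real.log_neg ht.1 ht.2
    have hm0 : 0 ≤ m t := le_of_lt (lt_min (by linarith) (by exact_mod_cast hd))
    exact mul_nonneg hC0 (Real.rpow_nonneg hm0 a)
  have hg_bdd : ∀ t ∈ Ioo (0:ℝ) 1, ‖C * m t ^ a‖ ≤ C * (d:ℝ) ^ a := by
    intro t ht
    rw [Real.norm_eq_abs, abs_of_nonneg (hg_nonneg t ht)]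
    have hlog : 0 < Real.log (1/t) := by
      rw [one_div, Real.log_inv]
      simpa using Real.log_neg ht.1 ht.2
    have hm0 : 0 ≤ m t := le_of_lt (lt_min (by linarith) (by exact_mod_cast hd))
    exact mul_le_mul_of_nonneg_left
      (Real.rpow_le_rpow hm0 (min_le_right _ _) ha.le) hC0
  have hInt : Integrable (fun t => C * m t ^ a) (volume.restrict (Ioo 0 1)) :=
    Integrable.mono' (integrable_const (C * (d:ℝ) ^ a)) hg_meas.aestronglyMeasurable
      ((ae_restrict_iff' measurableSet_Ioo).2 (Filter.Eventually.of_forall hg_bdd))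
  have hofReal : ENNReal.ofReal (∫ t in Ioo 0 1, C * m t ^ a)
      = ∫⁻ t in Ioo 0 1, ENNReal.ofReal (C * m t ^ a) :=
    MeasureTheory.ofReal_integral_eq_lintegral_ofReal hInt
      ((ae_restrict_iff' measurableSet_Ioo).2 (Filter.Eventually.of_forall hg_nonneg))
  -- substitution t = exp (-x)
  have hderiv : ∀ x ∈ Ioi (0:ℝ), HasDerivWithinAt (fun x : ℝ => Real.exp (-x))
      (-Real.exp (-x)) (Ioi 0) x := by
    intro x hx
    simpa using ((hasDerivAt_neg x).exp).hasDerivWithinAt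
  have hinj : InjOn (fun x : ℝ => Real.exp (-x)) (Ioi 0) := by
    intro x hx y hy h
    have := Real.exp_injective h
    linarith [neg_injective this]
  have hsubst : ∫ t in Ioo 0 1, C * m t ^ a
      = ∫ x in Ioi 0, |(-Real.exp (-x))| • (C * m (Real.exp (-x)) ^ a) := by
    rw [← image_exp_neg']
    exact MeasureTheory.integral_image_eq_integral_abs_deriv_smul measurableSet_Ioi hderiv hinj _
  have hsimp : ∀ x : ℝ, |(-Real.exp (-x))| • (C * m (Real.exp (-x)) ^ a)
      = C * (Real.exp (-x) * min (2*x) (2*a) ^ a) := by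
    intro x
    have hmx : m (Real.exp (-x)) = min (2*x) (2*a) := by
      show min (2 * Real.log (1 / Real.exp (-x))) (d:ℝ) = min (2*x) (2*a)
      rw [one_div, ← Real.exp_neg, neg_neg, Real.log_exp]
      congr 1
      rw [ha_def]; ring
    rw [hmx, abs_neg, abs_of_pos (Real.exp_pos _), smul_eq_mul]
    ring
  have hreal : C * (2 ^ a * (Real.Gamma (a+1) / 2)) ≤ ∫ t in Ioo 0 1, C * m t ^ a := by
    rw [hsubst]
    have : ∫ x in Ioi 0, |(-Real.exp (-x))| • (C * m (Real.exp (-x)) ^ a)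
        = C * ∫ x in Ioi 0, Real.exp (-x) * min (2*x) (2*a) ^ a := by
      rw [← MeasureTheory.integral_const_mul]
      exact MeasureTheory.integral_congr_ae (Filter.Eventually.of_forall fun x => hsimp x)
    rw [this]
    exact mul_le_mul_of_nonneg_left (key_real a ha) hC0
  have hconst : (1/2) * vmin * (2*Real.pi) ^ ((d:ℝ)/2) * σ ^ (d:ℕ)
      = C * (2 ^ a * (Real.Gamma (a+1) / 2)) := by
    rw [hC_def, ← ha_def, Real.mul_rpow (by norm_num : (0:ℝ) ≤ 2) Real.pi_pos.le]
    field_simp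
  calc ENNReal.ofReal ((1/2) * vmin * (2*Real.pi) ^ ((d:ℝ)/2) * σ ^ (d:ℕ))
      = ENNReal.ofReal (C * (2 ^ a * (Real.Gamma (a+1) / 2))) := by rw [hconst]
    _ ≤ ENNReal.ofReal (∫ t in Ioo 0 1, C * m t ^ a) := ENNReal.ofReal_le_ofReal hreal
    _ = ∫⁻ t in Ioo 0 1, ENNReal.ofReal (C * m t ^ a) := hofReal
    _ ≤ ∫⁻ t in Ioo 0 1, (volume.restrict Z) {u | t ≤ f u} :=
        lintegral_mono_ae ((ae_restrict_iff' measurableSet_Ioo).2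
          (Filter.Eventually.of_forall hpoint))
    _ ≤ ∫⁻ t in Ioi 0, (volume.restrict Z) {u | t ≤ f u} :=
        lintegral_mono_set Ioo_subset_Ioi_self
    _ = ∫⁻ u, ENNReal.ofReal (f u) ∂(volume.restrict Z) := hlayer.symm

theorem denominator_uniform_lower_bound
    {d : ℕ} (Z : Set (EuclideanSpace ℝ (Fin d)))
    (hZne : Z.Nonempty) (hZc : IsCompact Z)
    (vmin σmax : ℝ) (hv0 : 0 < vmin) (hv1 : vmin ≤ 1) (hσmax : 0 < σmax)
    (hvol : ∀ z ∈ Z, ∀ r : ℝ, 0 < r → r ≤ σmax * Real.sqrt d →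
      ENNReal.ofReal (vmin *
          (Real.pi ^ ((d : ℝ) / 2) * r ^ (d : ℕ) / Real.Gamma ((d : ℝ) / 2 + 1))) ≤
        volume {u : EuclideanSpace ℝ (Fin d) | u ∈ Z ∧ dist z u ≤ r})
    (μb : Measure (EuclideanSpace ℝ (Fin d))) [IsProbabilityMeasure μb]
    (pb : EuclideanSpace ℝ (Fin d) → ℝ)
    (hμb : μb = (volume.restrict Z).withDensity fun u => ENNReal.ofReal (pb u))
    (plow : ℝ) (hplow : 0 < plow)
    (hpb : ∀ᵐ u ∂volume.restrict Z, plow ≤ pb u) :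
    ∀ σ : ℝ, 0 < σ → σ ≤ σmax → ∀ z ∈ Z,
      (1 / 2) * plow * vmin * (2 * Real.pi) ^ ((d : ℝ) / 2) * σ ^ (d : ℕ) ≤
        ∫ u, Real.exp (-dist z u ^ 2 / (2 * σ ^ 2)) ∂μb := by
  intro σ hσ0 hσle z hz
  have hfc : Continuous fun u : EuclideanSpace ℝ (Fin d) =>
      Real.exp (-dist z u ^ 2 / (2 * σ ^ 2)) := by
    apply Real.continuous_exp.comp
    exact (((continuous_const.dist continuous_id).pow 2).neg).div_const _
  have h_nonneg : 0 ≤ᵐ[μb] fun u => Real.exp (-dist z u ^ 2 / (2 * σ ^ 2)) :=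
    Filter.Eventually.of_forall fun u => (Real.exp_pos _).le
  rw [MeasureTheory.integral_eq_lintegral_of_nonneg_ae h_nonneg hfc.aestronglyMeasurable]
  rcases Nat.eq_zero_or_pos d with hd0 | hd
  · -- degenerate case `d = 0`
    subst hd0
    have huniq : ∀ u v : EuclideanSpace ℝ (Fin 0), u = v := by
      intro u v
      have : dist u v = 0 := by simp [EuclideanSpace.dist_eq]
      exact dist_eq_zero.mp this
    have hvol1 : (volume : Measure (EuclideanSpace ℝ (Fin 0))) univ = 1 := by
      have h := (EuclideanSpace.volume_preserving_symm_measurableEquiv_toLp (Fin 0)).measure_preimage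
        (s := univ) MeasurableSet.univ.nullMeasurableSet
      have h2 : (volume : Measure (Fin 0 → ℝ)) univ = 1 := by
        rw [MeasureTheory.volume_pi, Measure.pi_univ]
        simp
      simpa [h2] using h
    have hZuniv : Z = univ := by
      apply eq_univ_of_forall
      intro u
      rw [huniq u hZne.some]
      exact hZne.some_mem
    have hint1 : ∫⁻ u, ENNReal.ofReal (Real.exp (-dist z u ^ 2 / (2 * σ ^ 2))) ∂μb = 1 := by
      have hone : ∀ u : EuclideanSpace ℝ (Fin 0),
          ENNReal.ofReal (Real.exp (-dist z u ^ 2 / (2 * σ ^ 2))) = 1 := by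
        intro u
        rw [huniq z u, dist_self]
        norm_num
      simp only [hone]
      simp [measure_univ]
    have hplow1 : plow ≤ 1 := by
      have hμ : μb univ = 1 := measure_univ
      rw [hμb, hZuniv, Measure.restrict_univ,
        withDensity_apply _ MeasurableSet.univ, Measure.restrict_univ] at hμ
      rw [hZuniv, Measure.restrict_univ] at hpb
      have hlb : ENNReal.ofReal plow * (volume : Measure (EuclideanSpace ℝ (Fin 0))) univ
          ≤ ∫⁻ u, ENNReal.ofReal (pb u) ∂(volume : Measure (EuclideanSpace ℝ (Fin 0))) := by
        rw [← MeasureTheory.lintegral_const]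
        exact lintegral_mono_ae (hpb.mono fun u hu => ENNReal.ofReal_le_ofReal hu)
      rw [hvol1, mul_one, hμ] at hlb
      exact ENNReal.ofReal_le_one.mp hlb
    rw [hint1]
    have : ((0:ℕ):ℝ) / 2 = 0 := by norm_num
    rw [this, Real.rpow_zero, pow_zero, ENNReal.toReal_one]
    nlinarith
  · -- main case `0 < d`
    have key := lintegral_gauss_lower hd hv0 hσmax hvol hσ0 hσle hz
    have hle1 : ∫⁻ u, ENNReal.ofReal (Real.exp (-dist z u ^ 2 / (2 * σ ^ 2))) ∂μb ≤ 1 := by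
      calc ∫⁻ u, ENNReal.ofReal (Real.exp (-dist z u ^ 2 / (2 * σ ^ 2))) ∂μb
          ≤ ∫⁻ _, 1 ∂μb := by
            apply lintegral_mono
            intro u
            apply ENNReal.ofReal_le_one.2
            apply Real.exp_le_one_iff.2
            have h1 : 0 ≤ dist z u ^ 2 / (2 * σ ^ 2) := by positivity
            have h2 : -dist z u ^ 2 / (2 * σ ^ 2) = -(dist z u ^ 2 / (2 * σ ^ 2)) := by ring
            linarith [h2 ▸ neg_nonpos_of_nonneg h1]
        _ = 1 := by simp
    have hmle : (ENNReal.ofReal plow) • (volume.restrict Z) ≤ μb := by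
      rw [hμb, ← withDensity_const]
      exact withDensity_mono (hpb.mono fun u hu => ENNReal.ofReal_le_ofReal hu)
    have hlow : ENNReal.ofReal
        ((1 / 2) * plow * vmin * (2 * Real.pi) ^ ((d : ℝ) / 2) * σ ^ (d : ℕ))
        ≤ ∫⁻ u, ENNReal.ofReal (Real.exp (-dist z u ^ 2 / (2 * σ ^ 2))) ∂μb := by
      calc ENNReal.ofReal
            ((1 / 2) * plow * vmin * (2 * Real.pi) ^ ((d : ℝ) / 2) * σ ^ (d : ℕ))
          = ENNReal.ofReal plow
            * ENNReal.ofReal ((1/2) * vmin * (2 * Real.pi) ^ ((d:ℝ)/2) * σ ^ (d : ℕ)) := by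
            rw [← ENNReal.ofReal_mul hplow.le]
            congr 1
            ring
        _ ≤ ENNReal.ofReal plow * ∫⁻ u, ENNReal.ofReal
              (Real.exp (-dist z u ^ 2 / (2 * σ ^ 2))) ∂(volume.restrict Z) :=
            mul_le_mul_right key _
        _ = ∫⁻ u, ENNReal.ofReal (Real.exp (-dist z u ^ 2 / (2 * σ ^ 2)))
              ∂((ENNReal.ofReal plow) • volume.restrict Z) :=
            by rw [lintegral_smul_measure, smul_eq_mul]
        _ ≤ ∫⁻ u, ENNReal.ofReal (Real.exp (-dist z u ^ 2 / (2 * σ ^ 2))) ∂μb :=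
            lintegral_mono' hmle le_rfl
    have hfin := ENNReal.toReal_mono (ne_top_of_le_ne_top ENNReal.one_ne_top hle1) hlow
    rwa [ENNReal.toReal_ofReal (by positivity)] at hfin
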